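/- If a triangle inscribed in E has incenter at the focus (c, 0) of E, then its inradius equals (b²/c²)(√(a² + c²) − a). -/
import Mathlib

noncomputable section

namespace PonceletIncircle

/-- Euclidean distance between two points of `ℝ × ℝ`. -/
def d (p q : ℝ × ℝ) : ℝ := Real.sqrt ((p.1 - q.1) ^ 2 + (p.2 - q.2) ^ 2)

/-- The triple `P₁ P₂ P₃` is affinely independent (a nondegenerate triangle). -/
def IsTriangle (P₁ P₂ P₃ : ℝ × ℝ) : Prop :=
  (P₂.1 - P₁.1) * (P₃.2 - P₁.2) - (P₂.2 - P₁.2) * (P₃.1 - P₁.1) ≠ 0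

/-- Membership in the ellipse centered at the origin with semiaxes `a` and `b`. -/
def OnEllipse (a b : ℝ) (p : ℝ × ℝ) : Prop := p.1 ^ 2 / a ^ 2 + p.2 ^ 2 / b ^ 2 = 1

/-- The incenter of the triangle, i.e. the center of its inscribed circle, given by the
standard sidelength-weighted barycentric formula. -/
def incenter (P₁ P₂ P₃ : ℝ × ℝ) : ℝ × ℝ :=
  ((d P₂ P₃ * P₁.1 + d P₃ P₁ * P₂.1 + d P₁ P₂ * P₃.1) / (d P₂ P₃ + d P₃ P₁ + d P₁ P₂),
   (d P₂ P₃ * P₁.2 + d P₃ P₁ * P₂.2 + d P₁ P₂ * P₃.2) / (d P₂ P₃ + d P₃ P₁ + d P₁ P₂))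

/-- The area of the triangle. -/
def area (P₁ P₂ P₃ : ℝ × ℝ) : ℝ :=
  |(P₂.1 - P₁.1) * (P₃.2 - P₁.2) - (P₂.2 - P₁.2) * (P₃.1 - P₁.1)| / 2

/-- The inradius of the triangle, i.e. the radius of its inscribed circle, equal to the
area divided by the semiperimeter. -/
def inradius (P₁ P₂ P₃ : ℝ × ℝ) : ℝ :=
  area P₁ P₂ P₃ / ((d P₂ P₃ + d P₃ P₁ + d P₁ P₂) / 2)

/-- The centroid of the triangle. -/
def centroid (P₁ P₂ P₃ : ℝ × ℝ) : ℝ × ℝ := (3⁻¹ : ℝ) • (P₁ + P₂ + P₃)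

end PonceletIncircle

open PonceletIncircle Real

set_option maxHeartbeats 1000000


lemma tangency_t (a b c r ti tj xi yi xj yj : ℝ)
    (hxi : xi * (1+ti^2) = a*(1-ti^2)) (hyi : yi*(1+ti^2) = 2*b*ti)
    (hxj : xj * (1+tj^2) = a*(1-tj^2)) (hyj : yj*(1+tj^2) = 2*b*tj)
    (hij : ti ≠ tj)
    (htan : r^2*((xi-xj)^2+(yi-yj)^2) = ((xi-c)*yj - (xj-c)*yi)^2) :
    b^2*((a-c)+(a+c)*ti*tj)^2 = r^2*(b^2*(1-ti*tj)^2 + a^2*(ti+tj)^2) := by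
  have hdx : (1+ti^2)*(1+tj^2)*(xi-xj) = 2*a*(tj^2-ti^2) := by
    linear_combination (1+tj^2)*hxi - (1+ti^2)*hxj
  have hdy : (1+ti^2)*(1+tj^2)*(yi-yj) = 2*b*(ti-tj)*(1-ti*tj) := by
    linear_combination (1+tj^2)*hyi - (1+ti^2)*hyj
  have hw : (1+ti^2)*(1+tj^2)*((xi-c)*yj - (xj-c)*yi) = 2*b*(tj-ti)*((a-c)+(a+c)*ti*tj) := by
    linear_combination (1+tj^2)*yj*hxi - (1+ti^2)*yi*hxj + (a*(1-ti^2)-c*(1+ti^2))*hyj - (a*(1-tj^2)-c*(1+tj^2))*hyi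
  have hne : ((2:ℝ)*(ti-tj))^2 ≠ 0 := by
    have := sub_ne_zero.2 hij
    positivity
  refine mul_left_cancel₀ hne ?_
  linear_combination -((1+ti^2)*(1+tj^2))^2*htan
    + r^2*((1+ti^2)*(1+tj^2)*(xi-xj) + 2*a*(tj^2-ti^2))*hdx
    + r^2*((1+ti^2)*(1+tj^2)*(yi-yj) + 2*b*(ti-tj)*(1-ti*tj))*hdy
    - ((1+ti^2)*(1+tj^2)*((xi-c)*yj - (xj-c)*yi) + 2*b*(tj-ti)*((a-c)+(a+c)*ti*tj))*hw


-- K = (a^2-c^2)*((a+c)^2-r^2), M = a^2*r^2, N = (a^2-c^2)^2 - c^2*r^2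
lemma elim_t (a c r t1 t2 t3 : ℝ) (h12 : t1 ≠ t2) (h23 : t2 ≠ t3) (h13 : t1 ≠ t3)
    (hE12 : (a^2-c^2)*((a-c)+(a+c)*t1*t2)^2
       = r^2*((a^2-c^2)*(1-t1*t2)^2+a^2*(t1+t2)^2))
    (hE23 : (a^2-c^2)*((a-c)+(a+c)*t2*t3)^2
       = r^2*((a^2-c^2)*(1-t2*t3)^2+a^2*(t2+t3)^2))
    (hE13 : (a^2-c^2)*((a-c)+(a+c)*t1*t3)^2
       = r^2*((a^2-c^2)*(1-t1*t3)^2+a^2*(t1+t3)^2)) :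
    (c^2*r^2 + 2*a*(a^2-c^2)*r - (a^2-c^2)^2)
      * (c^2*r^2 - 2*a*(a^2-c^2)*r - (a^2-c^2)^2) = 0 := by
  have hF1 : (t2+t3)*((a^2-c^2)*((a+c)^2-r^2)*t1^2 - a^2*r^2)
      + 2*((a^2-c^2)^2 - c^2*r^2)*t1 = 0 := by
    have h : (t2-t3)*((t2+t3)*((a^2-c^2)*((a+c)^2-r^2)*t1^2 - a^2*r^2)
        + 2*((a^2-c^2)^2 - c^2*r^2)*t1) = 0 := by linear_combination hE12 - hE13
    exact (mul_eq_zero.mp h).resolve_left (sub_ne_zero.2 h23)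
  have hF2 : (t1+t3)*((a^2-c^2)*((a+c)^2-r^2)*t2^2 - a^2*r^2)
      + 2*((a^2-c^2)^2 - c^2*r^2)*t2 = 0 := by
    have h : (t1-t3)*((t1+t3)*((a^2-c^2)*((a+c)^2-r^2)*t2^2 - a^2*r^2)
        + 2*((a^2-c^2)^2 - c^2*r^2)*t2) = 0 := by linear_combination hE12 - hE23
    exact (mul_eq_zero.mp h).resolve_left (sub_ne_zero.2 h13)
  have hF3 : (t1+t2)*((a^2-c^2)*((a+c)^2-r^2)*t3^2 - a^2*r^2)
      + 2*((a^2-c^2)^2 - c^2*r^2)*t3 = 0 := by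
    have h : (t1-t2)*((t1+t2)*((a^2-c^2)*((a+c)^2-r^2)*t3^2 - a^2*r^2)
        + 2*((a^2-c^2)^2 - c^2*r^2)*t3) = 0 := by linear_combination hE13 - hE23
    exact (mul_eq_zero.mp h).resolve_left (sub_ne_zero.2 h12)
  have hG : (a^2-c^2)*((a+c)^2-r^2)*(t1*t2+t2*t3+t3*t1)
      + a^2*r^2 + 2*((a^2-c^2)^2 - c^2*r^2) = 0 := by
    have h : (t1-t2)*((a^2-c^2)*((a+c)^2-r^2)*(t1*t2+t2*t3+t3*t1)
        + a^2*r^2 + 2*((a^2-c^2)^2 - c^2*r^2)) = 0 := by linear_combination hF1 - hF2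
    exact (mul_eq_zero.mp h).resolve_left (sub_ne_zero.2 h12)
  have hH : (a^2-c^2)*((a+c)^2-r^2)*(t1*t2*t3) + a^2*r^2*(t1+t2+t3) = 0 := by
    linear_combination (-1/3)*(hF1+hF2+hF3) + (1/3)*(t1+t2+t3)*hG
  linear_combination (1/3)*((a^2-c^2)*((a+c)^2-r^2))*(hE12+hE23+hE13)
    - (1/3)*((a^2-c^2)*((a+c)^2-r^2)*(t1*t2+t2*t3+t3*t1) - (a^2*r^2 + 2*((a^2-c^2)^2 - c^2*r^2))
        + 2*(a^2-c^2)*((a^2-c^2)+r^2) + 2*a^2*r^2)*hG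
    + (2/3)*(t1+t2+t3)*((a^2-c^2)*((a+c)^2-r^2))*hH


lemma coreDeg (a b c r s x1 y1 x2 y2 x3 y3 l1 l2 l3 T : ℝ)
    (ha : 0 < a) (hbpos : 0 < b) (hc : 0 < c) (hc2 : c^2 = a^2 - b^2)
    (hrpos : 0 < r) (hT : T ≠ 0)
    (hl1 : 0 < l1) (hl2 : 0 < l2) (hl3 : 0 < l3) (hs : 0 < s)
    (hx1 : x1 = -a) (hy1 : y1 = 0)
    (hell2 : b^2*x2^2 + a^2*y2^2 = a^2*b^2)
    (hell3 : b^2*x3^2 + a^2*y3^2 = a^2*b^2)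
    (hw1 : s*((x2-c)*y3 - (x3-c)*y2) = l1*T)
    (hw2 : s*((x3-c)*y1 - (x1-c)*y3) = l2*T)
    (hw3 : s*((x1-c)*y2 - (x2-c)*y1) = l3*T)
    (hA1 : r^2*((x2-x3)^2+(y2-y3)^2) = ((x2-c)*y3 - (x3-c)*y2)^2)
    (hA2 : r^2*((x3-x1)^2+(y3-y1)^2) = ((x3-c)*y1 - (x1-c)*y3)^2)
    (hA3 : r^2*((x1-x2)^2+(y1-y2)^2) = ((x1-c)*y2 - (x2-c)*y1)^2) :
    c^2*r^2 + 2*a*b^2*r - b^4 = 0 := by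
  subst hx1 hy1
  have hac : 0 < a + c := by linarith
  have hT2 : 0 < T^2 := by positivity
  have hw2' : s*((a+c)*y3) = l2*T := by linear_combination hw2
  have hw3' : s*((a+c)*y2) = -(l3*T) := by linear_combination -hw3
  have hy23 : y2*y3 < 0 := by
    have h : (s*(a+c))^2*(y2*y3) = -(l2*l3*T^2) := by
      linear_combination (s*(a+c)*y3)*hw3' - (l3*T)*hw2'
    have hpos : 0 < (s*(a+c))^2 := by positivity
    nlinarith [mul_pos (mul_pos hl2 hl3) hT2]
  have hy2ne : y2 ≠ 0 := by intro h; rw [h, zero_mul] at hy23; exact lt_irrefl 0 hy23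
  have hy3ne : y3 ≠ 0 := by intro h; rw [h, mul_zero] at hy23; exact lt_irrefl 0 hy23
  have hax2 : a + x2 ≠ 0 := by
    intro h
    apply hy2ne
    have h4 : a^2*y2^2 = 0 := by
      have hx2 : x2 = -a := by linarith
      rw [hx2] at hell2; linarith
    have h5 : y2^2 = 0 := by
      have := (mul_eq_zero.mp h4).resolve_left (by positivity)
      exact this
    exact (pow_eq_zero_iff two_ne_zero).mp h5
  have hax3 : a + x3 ≠ 0 := by
    intro h
    apply hy3ne
    have h4 : a^2*y3^2 = 0 := by
      have hx3 : x3 = -a := by linarith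
      rw [hx3] at hell3; linarith
    have h5 : y3^2 = 0 := (mul_eq_zero.mp h4).resolve_left (by positivity)
    exact (pow_eq_zero_iff two_ne_zero).mp h5
  have h2eq : (a+x2)*(r^2*a^2*(a+x2)) = (a+x2)*(b^2*((a+c)^2 - r^2)*(a - x2)) := by
    linear_combination a^2*hA3 + ((a+c)^2 - r^2)*hell2
  have h2eq' : r^2*a^2*(a+x2) = b^2*((a+c)^2 - r^2)*(a - x2) :=
    mul_left_cancel₀ hax2 h2eq
  have h3eq : (a+x3)*(r^2*a^2*(a+x3)) = (a+x3)*(b^2*((a+c)^2 - r^2)*(a - x3)) := by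
    linear_combination a^2*hA2 + ((a+c)^2 - r^2)*hell3
  have h3eq' : r^2*a^2*(a+x3) = b^2*((a+c)^2 - r^2)*(a - x3) :=
    mul_left_cancel₀ hax3 h3eq
  have hx23 : x3 = x2 := by
    have h : (x2-x3)*(c^2*r^2 + b^2*(a+c)^2) = 0 := by
      linear_combination h2eq' - h3eq' + r^2*(x2-x3)*hc2
    have h2 : x2 - x3 = 0 :=
      (mul_eq_zero.mp h).resolve_right (by positivity)
    linarith
  subst hx23
  have hy3 : y3 = -y2 := by
    have h : (y2-y3)*(y2+y3) = 0 := by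
      apply mul_left_cancel₀ (show (a^2:ℝ) ≠ 0 by positivity)
      linear_combination hell2 - hell3
    rcases mul_eq_zero.mp h with h' | h'
    · exfalso
      have hy : y3 = y2 := by linarith
      rw [hy] at hy23; nlinarith [sq_nonneg y2]
    · linarith
  subst hy3
  have hx2c : 0 < x3 - c := by
    have h : T*(2*l3*(x3-c) - l1*(a+c)) = 0 := by
      linear_combination (a+c)*hw1 + 2*(x3-c)*hw3'
    have h2 : 2*l3*(x3-c) = l1*(a+c) := by
      have := (mul_eq_zero.mp h).resolve_left hT
      linarith
    nlinarith [mul_pos hl1 hac]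
  have hx2r : x3 = c + r := by
    have h : (4*y2^2)*((x3-c-r)*(x3-c+r)) = 0 := by linear_combination -hA1
    have h2 := (mul_eq_zero.mp h).resolve_left (by positivity)
    rcases mul_eq_zero.mp h2 with h' | h'
    · linarith
    · exfalso; linarith
  subst hx2r
  have hyr : y2^2*((a+c) - r) = r^2*((a+c) + r) := by
    apply mul_left_cancel₀ (show ((a:ℝ)+c+r) ≠ 0 by positivity)
    linear_combination -hA3
  have hfin : (a+c+r)*(c^2*r^2 + 2*a*b^2*r - b^4) = 0 := by
    linear_combination ((a+c)-r)*hell2 - a^2*hyr + (a+c+r)*(r^2-b^2)*hc2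
  exact (mul_eq_zero.mp hfin).resolve_left (by positivity)

lemma coreGen (a b c r x1 y1 x2 y2 x3 y3 : ℝ)
    (ha : 0 < a) (hbpos : 0 < b) (hc2 : c^2 = a^2 - b^2)
    (hd1 : 0 < a + x1) (hd2 : 0 < a + x2) (hd3 : 0 < a + x3)
    (hp12 : ¬(x1 = x2 ∧ y1 = y2)) (hp23 : ¬(x2 = x3 ∧ y2 = y3))
    (hp13 : ¬(x1 = x3 ∧ y1 = y3))
    (hell1 : b^2*x1^2 + a^2*y1^2 = a^2*b^2)
    (hell2 : b^2*x2^2 + a^2*y2^2 = a^2*b^2)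
    (hell3 : b^2*x3^2 + a^2*y3^2 = a^2*b^2)
    (hA12 : r^2*((x1-x2)^2+(y1-y2)^2) = ((x1-c)*y2-(x2-c)*y1)^2)
    (hA23 : r^2*((x2-x3)^2+(y2-y3)^2) = ((x2-c)*y3-(x3-c)*y2)^2)
    (hA31 : r^2*((x3-x1)^2+(y3-y1)^2) = ((x3-c)*y1-(x1-c)*y3)^2) :
    (c^2*r^2 + 2*a*b^2*r - b^4)*(c^2*r^2 - 2*a*b^2*r - b^4) = 0 := by
  have hb1 : b*(a+x1) ≠ 0 := by positivity
  have hb2 : b*(a+x2) ≠ 0 := by positivity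
  have hb3 : b*(a+x3) ≠ 0 := by positivity
  obtain ⟨t1, hty1⟩ : ∃ t, t*(b*(a+x1)) = a*y1 := ⟨a*y1/(b*(a+x1)), by field_simp⟩
  obtain ⟨t2, hty2⟩ : ∃ t, t*(b*(a+x2)) = a*y2 := ⟨a*y2/(b*(a+x2)), by field_simp⟩
  obtain ⟨t3, hty3⟩ : ∃ t, t*(b*(a+x3)) = a*y3 := ⟨a*y3/(b*(a+x3)), by field_simp⟩
  have hsq1 : t1^2*(a+x1) = a - x1 := by
    apply mul_left_cancel₀ (pow_ne_zero 2 hb1)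
    linear_combination ((a+x1)*(t1*(b*(a+x1)) + a*y1))*hty1 + (a+x1)*hell1
  have hsq2 : t2^2*(a+x2) = a - x2 := by
    apply mul_left_cancel₀ (pow_ne_zero 2 hb2)
    linear_combination ((a+x2)*(t2*(b*(a+x2)) + a*y2))*hty2 + (a+x2)*hell2
  have hsq3 : t3^2*(a+x3) = a - x3 := by
    apply mul_left_cancel₀ (pow_ne_zero 2 hb3)
    linear_combination ((a+x3)*(t3*(b*(a+x3)) + a*y3))*hty3 + (a+x3)*hell3
  have hx1 : x1*(1+t1^2) = a*(1-t1^2) := by linear_combination hsq1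
  have hx2 : x2*(1+t2^2) = a*(1-t2^2) := by linear_combination hsq2
  have hx3 : x3*(1+t3^2) = a*(1-t3^2) := by linear_combination hsq3
  have hy1 : y1*(1+t1^2) = 2*b*t1 := by
    apply mul_left_cancel₀ (ne_of_gt hd1)
    linear_combination y1*hsq1 - 2*hty1
  have hy2 : y2*(1+t2^2) = 2*b*t2 := by
    apply mul_left_cancel₀ (ne_of_gt hd2)
    linear_combination y2*hsq2 - 2*hty2
  have hy3 : y3*(1+t3^2) = 2*b*t3 := by
    apply mul_left_cancel₀ (ne_of_gt hd3)
    linear_combination y3*hsq3 - 2*hty3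
  have hq1 : (0:ℝ) < 1 + t1^2 := by positivity
  have hq2 : (0:ℝ) < 1 + t2^2 := by positivity
  have hq3 : (0:ℝ) < 1 + t3^2 := by positivity
  have hx1e : x1 = a*(1-t1^2)/(1+t1^2) := by rw [eq_div_iff (ne_of_gt hq1)]; exact hx1
  have hx2e : x2 = a*(1-t2^2)/(1+t2^2) := by rw [eq_div_iff (ne_of_gt hq2)]; exact hx2
  have hx3e : x3 = a*(1-t3^2)/(1+t3^2) := by rw [eq_div_iff (ne_of_gt hq3)]; exact hx3
  have hy1e : y1 = 2*b*t1/(1+t1^2) := by rw [eq_div_iff (ne_of_gt hq1)]; exact hy1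
  have hy2e : y2 = 2*b*t2/(1+t2^2) := by rw [eq_div_iff (ne_of_gt hq2)]; exact hy2
  have hy3e : y3 = 2*b*t3/(1+t3^2) := by rw [eq_div_iff (ne_of_gt hq3)]; exact hy3
  have ht12 : t1 ≠ t2 := by
    intro h; exact hp12 ⟨by rw [hx1e, hx2e, h], by rw [hy1e, hy2e, h]⟩
  have ht23 : t2 ≠ t3 := by
    intro h; exact hp23 ⟨by rw [hx2e, hx3e, h], by rw [hy2e, hy3e, h]⟩
  have ht13 : t1 ≠ t3 := by
    intro h; exact hp13 ⟨by rw [hx1e, hx3e, h], by rw [hy1e, hy3e, h]⟩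
  have hE12 := tangency_t a b c r t1 t2 x1 y1 x2 y2 hx1 hy1 hx2 hy2 ht12 hA12
  have hE23 := tangency_t a b c r t2 t3 x2 y2 x3 y3 hx2 hy2 hx3 hy3 ht23 hA23
  have hE31 := tangency_t a b c r t3 t1 x3 y3 x1 y1 hx3 hy3 hx1 hy1 (Ne.symm ht13) hA31
  have hab2 : b^2 = a^2 - c^2 := by linarith
  have hab4 : b^4 = (a^2-c^2)^2 := by rw [← hab2]; ring
  have hE12' : (a^2-c^2)*((a-c)+(a+c)*t1*t2)^2
       = r^2*((a^2-c^2)*(1-t1*t2)^2+a^2*(t1+t2)^2) := by rw [← hab2]; exact hE12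
  have hE23' : (a^2-c^2)*((a-c)+(a+c)*t2*t3)^2
       = r^2*((a^2-c^2)*(1-t2*t3)^2+a^2*(t2+t3)^2) := by rw [← hab2]; exact hE23
  have hE13' : (a^2-c^2)*((a-c)+(a+c)*t1*t3)^2
       = r^2*((a^2-c^2)*(1-t1*t3)^2+a^2*(t1+t3)^2) := by
    rw [← hab2]; linear_combination hE31
  have h := elim_t a c r t1 t2 t3 ht12 ht23 ht13 hE12' hE23' hE13'
  rw [hab2, hab4]; exact h

lemma core (a b c r x1 y1 x2 y2 x3 y3 l1 l2 l3 T : ℝ)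
    (ha : 0 < a) (hbpos : 0 < b) (hba : b < a) (hc : 0 < c) (hca : c < a)
    (hc2 : c^2 = a^2 - b^2)
    (hT : T = (x2-x1)*(y3-y1) - (y2-y1)*(x3-x1)) (hTne : T ≠ 0)
    (hl1 : l1^2 = (x2-x3)^2+(y2-y3)^2) (hl1p : 0 < l1)
    (hl2 : l2^2 = (x3-x1)^2+(y3-y1)^2) (hl2p : 0 < l2)
    (hl3 : l3^2 = (x1-x2)^2+(y1-y2)^2) (hl3p : 0 < l3)
    (hell1 : b^2*x1^2 + a^2*y1^2 = a^2*b^2)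
    (hell2 : b^2*x2^2 + a^2*y2^2 = a^2*b^2)
    (hell3 : b^2*x3^2 + a^2*y3^2 = a^2*b^2)
    (hsx : l1*x1+l2*x2+l3*x3 = c*(l1+l2+l3))
    (hsy : l1*y1+l2*y2+l3*y3 = 0)
    (hrs : r*(l1+l2+l3) = |T|) (hrpos : 0 < r) :
    c^2*r^2 + 2*a*b^2*r - b^4 = 0 := by
  have hs : 0 < l1+l2+l3 := by linarith only [hl1p, hl2p, hl3p]
  have hsne : (l1+l2+l3) ≠ 0 := ne_of_gt hs
  have hT2 : T^2 = (r*(l1+l2+l3))^2 := by rw [hrs, sq_abs]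
  -- w identities
  have hw1 : (l1+l2+l3)*((x2-c)*y3 - (x3-c)*y2) = l1*T := by
    linear_combination (y3-y2)*hsx + (x2-x3)*hsy - l1*hT
  have hw2 : (l1+l2+l3)*((x3-c)*y1 - (x1-c)*y3) = l2*T := by
    linear_combination (y1-y3)*hsx + (x3-x1)*hsy - l2*hT
  have hw3 : (l1+l2+l3)*((x1-c)*y2 - (x2-c)*y1) = l3*T := by
    linear_combination (y2-y1)*hsx + (x1-x2)*hsy - l3*hT
  -- tangency (squared)
  have hA1 : r^2*((x2-x3)^2+(y2-y3)^2) = ((x2-c)*y3 - (x3-c)*y2)^2 := by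
    rw [← hl1]
    apply mul_left_cancel₀ (pow_ne_zero 2 hsne)
    linear_combination -((l1+l2+l3)*((x2-c)*y3 - (x3-c)*y2) + l1*T)*hw1 - l1^2*hT2
  have hA2 : r^2*((x3-x1)^2+(y3-y1)^2) = ((x3-c)*y1 - (x1-c)*y3)^2 := by
    rw [← hl2]
    apply mul_left_cancel₀ (pow_ne_zero 2 hsne)
    linear_combination -((l1+l2+l3)*((x3-c)*y1 - (x1-c)*y3) + l2*T)*hw2 - l2^2*hT2
  have hA3 : r^2*((x1-x2)^2+(y1-y2)^2) = ((x1-c)*y2 - (x2-c)*y1)^2 := by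
    rw [← hl3]
    apply mul_left_cancel₀ (pow_ne_zero 2 hsne)
    linear_combination -((l1+l2+l3)*((x1-c)*y2 - (x2-c)*y1) + l3*T)*hw3 - l3^2*hT2
  -- bounds on coordinates
  have hb2x1 : b^2*x1^2 ≤ b^2*a^2 := by linarith only [hell1, sq_nonneg (a*y1)]
  have hx1sq : x1^2 ≤ a^2 := by nlinarith only [hb2x1, mul_pos hbpos hbpos]
  have hx1a : x1 ≤ a := by nlinarith only [hx1sq, ha]
  have hb2x2 : b^2*x2^2 ≤ b^2*a^2 := by linarith only [hell2, sq_nonneg (a*y2)]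
  have hx2sq : x2^2 ≤ a^2 := by nlinarith only [hb2x2, mul_pos hbpos hbpos]
  have hx2a : x2 ≤ a := by nlinarith only [hx2sq, ha]
  have hb2x3 : b^2*x3^2 ≤ b^2*a^2 := by linarith only [hell3, sq_nonneg (a*y3)]
  have hx3sq : x3^2 ≤ a^2 := by nlinarith only [hb2x3, mul_pos hbpos hbpos]
  have hx3a : x3 ≤ a := by nlinarith only [hx3sq, ha]
  -- w_i * T = l_i * r^2 * s
  have hw1T : ((x2-c)*y3 - (x3-c)*y2)*T = l1*r^2*(l1+l2+l3) := by
    apply mul_left_cancel₀ hsne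
    linear_combination T*hw1 + l1*hT2
  have hw2T : ((x3-c)*y1 - (x1-c)*y3)*T = l2*r^2*(l1+l2+l3) := by
    apply mul_left_cancel₀ hsne
    linear_combination T*hw2 + l2*hT2
  have hw3T : ((x1-c)*y2 - (x2-c)*y1)*T = l3*r^2*(l1+l2+l3) := by
    apply mul_left_cancel₀ hsne
    linear_combination T*hw3 + l3*hT2
  -- interiority: r ≤ a - c
  have habs1 : |y3-y2| ≤ l1 := by
    rw [← Real.sqrt_sq hl1p.le, ← Real.sqrt_sq_eq_abs]
    apply Real.sqrt_le_sqrt; linarith only [hl1, sq_nonneg (x2-x3)]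
  have habs2 : |y1-y3| ≤ l2 := by
    rw [← Real.sqrt_sq hl2p.le, ← Real.sqrt_sq_eq_abs]
    apply Real.sqrt_le_sqrt; linarith only [hl2, sq_nonneg (x3-x1)]
  have habs3 : |y2-y1| ≤ l3 := by
    rw [← Real.sqrt_sq hl3p.le, ← Real.sqrt_sq_eq_abs]
    apply Real.sqrt_le_sqrt; linarith only [hl3, sq_nonneg (x1-x2)]
  have hyT1 : (y3-y2)*T ≤ l1*(r*(l1+l2+l3)) := by
    calc (y3-y2)*T ≤ |(y3-y2)*T| := le_abs_self _
      _ = |y3-y2| * |T| := abs_mul _ _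
      _ ≤ l1 * |T| := mul_le_mul_of_nonneg_right habs1 (abs_nonneg T)
      _ = l1*(r*(l1+l2+l3)) := by rw [← hrs]
  have hyT2 : (y1-y3)*T ≤ l2*(r*(l1+l2+l3)) := by
    calc (y1-y3)*T ≤ |(y1-y3)*T| := le_abs_self _
      _ = |y1-y3| * |T| := abs_mul _ _
      _ ≤ l2 * |T| := mul_le_mul_of_nonneg_right habs2 (abs_nonneg T)
      _ = l2*(r*(l1+l2+l3)) := by rw [← hrs]
  have hyT3 : (y2-y1)*T ≤ l3*(r*(l1+l2+l3)) := by
    calc (y2-y1)*T ≤ |(y2-y1)*T| := le_abs_self _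
      _ = |y2-y1| * |T| := abs_mul _ _
      _ ≤ l3 * |T| := mul_le_mul_of_nonneg_right habs3 (abs_nonneg T)
      _ = l3*(r*(l1+l2+l3)) := by rw [← hrs]
  have hmu1 : 0 ≤ ((x2-(c+r))*y3 - (x3-(c+r))*y2)*T := by
    have h : ((x2-(c+r))*y3 - (x3-(c+r))*y2)*T
        = ((x2-c)*y3 - (x3-c)*y2)*T - r*((y3-y2)*T) := by ring
    rw [h, hw1T]
    linarith only [mul_le_mul_of_nonneg_left hyT1 hrpos.le]
  have hmu2 : 0 ≤ ((x3-(c+r))*y1 - (x1-(c+r))*y3)*T := by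
    have h : ((x3-(c+r))*y1 - (x1-(c+r))*y3)*T
        = ((x3-c)*y1 - (x1-c)*y3)*T - r*((y1-y3)*T) := by ring
    rw [h, hw2T]
    linarith only [mul_le_mul_of_nonneg_left hyT2 hrpos.le]
  have hmu3 : 0 ≤ ((x1-(c+r))*y2 - (x2-(c+r))*y1)*T := by
    have h : ((x1-(c+r))*y2 - (x2-(c+r))*y1)*T
        = ((x1-c)*y2 - (x2-c)*y1)*T - r*((y2-y1)*T) := by ring
    rw [h, hw3T]
    linarith only [mul_le_mul_of_nonneg_left hyT3 hrpos.le]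
  have hbar : (((x2-(c+r))*y3 - (x3-(c+r))*y2)*x1 + ((x3-(c+r))*y1 - (x1-(c+r))*y3)*x2
      + ((x1-(c+r))*y2 - (x2-(c+r))*y1)*x3) = T*(c+r) := by
    linear_combination -(c+r)*hT
  have hsum : ((x2-(c+r))*y3 - (x3-(c+r))*y2) + ((x3-(c+r))*y1 - (x1-(c+r))*y3)
      + ((x1-(c+r))*y2 - (x2-(c+r))*y1) = T := by
    linear_combination -hT
  have hT2pos : 0 < T^2 := by positivity
  have hid : ((x2-(c+r))*y3 - (x3-(c+r))*y2)*T*(a-x1)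
      + ((x3-(c+r))*y1 - (x1-(c+r))*y3)*T*(a-x2)
      + ((x1-(c+r))*y2 - (x2-(c+r))*y1)*T*(a-x3) = T^2*a - T^2*(c+r) := by
    linear_combination a*T*hsum - T*hbar
  have h3 : 0 ≤ T^2*a - T^2*(c+r) := by
    rw [← hid]
    have m1 := mul_nonneg hmu1 (sub_nonneg.mpr hx1a)
    have m2 := mul_nonneg hmu2 (sub_nonneg.mpr hx2a)
    have m3 := mul_nonneg hmu3 (sub_nonneg.mpr hx3a)
    linarith only [m1, m2, m3]
  have hra : r ≤ a - c := by nlinarith only [hT2pos, h3]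
  -- case split on a vertex at (-a, 0)
  by_cases hca1 : x1 = -a
  · have hy10 : y1 = 0 := by
      have h4 : a^2*y1^2 = 0 := by rw [hca1] at hell1; linarith only [hell1]
      have h5 : y1^2 = 0 := (mul_eq_zero.mp h4).resolve_left (by positivity)
      exact (pow_eq_zero_iff two_ne_zero).mp h5
    exact coreDeg a b c r (l1+l2+l3) x1 y1 x2 y2 x3 y3 l1 l2 l3 T ha hbpos hc hc2 hrpos hTne
      hl1p hl2p hl3p hs hca1 hy10 hell2 hell3 hw1 hw2 hw3 hA1 hA2 hA3
  by_cases hca2 : x2 = -a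
  · have hy20 : y2 = 0 := by
      have h4 : a^2*y2^2 = 0 := by rw [hca2] at hell2; linarith only [hell2]
      have h5 : y2^2 = 0 := (mul_eq_zero.mp h4).resolve_left (by positivity)
      exact (pow_eq_zero_iff two_ne_zero).mp h5
    exact coreDeg a b c r (l1+l2+l3) x2 y2 x3 y3 x1 y1 l2 l3 l1 T ha hbpos hc hc2 hrpos hTne
      hl2p hl3p hl1p hs hca2 hy20 hell3 hell1
      (by linear_combination hw2) (by linear_combination hw3) (by linear_combination hw1)
      (by linear_combination hA2) (by linear_combination hA3) (by linear_combination hA1)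
  by_cases hca3 : x3 = -a
  · have hy30 : y3 = 0 := by
      have h4 : a^2*y3^2 = 0 := by rw [hca3] at hell3; linarith only [hell3]
      have h5 : y3^2 = 0 := (mul_eq_zero.mp h4).resolve_left (by positivity)
      exact (pow_eq_zero_iff two_ne_zero).mp h5
    exact coreDeg a b c r (l1+l2+l3) x3 y3 x1 y1 x2 y2 l3 l1 l2 T ha hbpos hc hc2 hrpos hTne
      hl3p hl1p hl2p hs hca3 hy30 hell1 hell2
      (by linear_combination hw3) (by linear_combination hw1) (by linear_combination hw2)
      (by linear_combination hA3) (by linear_combination hA1) (by linear_combination hA2)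
  · -- generic case
    have hd1 : 0 < a + x1 := by
      have hge : -a ≤ x1 := by nlinarith only [hx1sq, ha]
      rcases lt_or_eq_of_le hge with h | h
      · linarith
      · exact absurd h.symm hca1
    have hd2 : 0 < a + x2 := by
      have hge : -a ≤ x2 := by nlinarith only [hx2sq, ha]
      rcases lt_or_eq_of_le hge with h | h
      · linarith
      · exact absurd h.symm hca2
    have hd3 : 0 < a + x3 := by
      have hge : -a ≤ x3 := by nlinarith only [hx3sq, ha]
      rcases lt_or_eq_of_le hge with h | h
      · linarith
      · exact absurd h.symm hca3
    have hp12 : ¬(x1 = x2 ∧ y1 = y2) := by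
      rintro ⟨h1, h2⟩; apply hTne; rw [hT, h1, h2]; ring
    have hp23 : ¬(x2 = x3 ∧ y2 = y3) := by
      rintro ⟨h1, h2⟩; apply hTne; rw [hT, h1, h2]; ring
    have hp13 : ¬(x1 = x3 ∧ y1 = y3) := by
      rintro ⟨h1, h2⟩; apply hTne; rw [hT, h1, h2]; ring
    have hfac := coreGen a b c r x1 y1 x2 y2 x3 y3 ha hbpos hc2 hd1 hd2 hd3 hp12 hp23 hp13
      hell1 hell2 hell3 hA3 hA1 hA2
    -- exclude the excircle root using r ≤ a - c
    have hcr : c*r < b^2 := by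
      linarith only [mul_le_mul_of_nonneg_left hra hc.le, mul_lt_mul_of_pos_left hca ha, hc2]
    have hneg : c^2*r^2 - 2*a*b^2*r - b^4 < 0 := by
      nlinarith only [hcr, mul_pos hc hrpos, mul_pos (mul_pos ha (mul_pos hbpos hbpos)) hrpos]
    exact (mul_eq_zero.mp hfac).resolve_right (ne_of_lt hneg)

lemma aux_pos (x y x' y' : ℝ) (h : ¬(x = x' ∧ y = y')) : 0 < (x-x')^2 + (y-y')^2 := by
  rcases not_and_or.mp h with h | h
  · have h' : x - x' ≠ 0 := sub_ne_zero.mpr h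
    have h2 := lt_of_le_of_ne (sq_nonneg (x-x')) (Ne.symm (pow_ne_zero 2 h'))
    linarith only [h2, sq_nonneg (y-y')]
  · have h' : y - y' ≠ 0 := sub_ne_zero.mpr h
    have h2 := lt_of_le_of_ne (sq_nonneg (y-y')) (Ne.symm (pow_ne_zero 2 h'))
    linarith only [h2, sq_nonneg (x-x')]

theorem stmt_10 (a b : ℝ) (hb : 0 < b) (hba : b < a)
    (c : ℝ) (hc : c = Real.sqrt (a ^ 2 - b ^ 2))
    (P₁ P₂ P₃ : ℝ × ℝ) (hT : IsTriangle P₁ P₂ P₃)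
    (hP₁ : OnEllipse a b P₁) (hP₂ : OnEllipse a b P₂) (hP₃ : OnEllipse a b P₃)
    (hI : incenter P₁ P₂ P₃ = (c, (0 : ℝ))) :
    inradius P₁ P₂ P₃ = b ^ 2 / c ^ 2 * (Real.sqrt (a ^ 2 + c ^ 2) - a) := by
  obtain ⟨x1, y1⟩ := P₁
  obtain ⟨x2, y2⟩ := P₂
  obtain ⟨x3, y3⟩ := P₃
  have ha : 0 < a := lt_trans hb hba
  have hab2 : 0 < a^2 - b^2 := by nlinarith only [hb, hba, ha]
  have hcpos : 0 < c := by
    rw [hc]; exact Real.sqrt_pos.mpr (by linarith [hab2])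
  have hc2 : c^2 = a^2 - b^2 := by
    rw [hc, sq]; exact Real.mul_self_sqrt hab2.le
  have hca : c < a := by nlinarith only [hc2, hcpos, ha, mul_pos hb hb]
  simp only [IsTriangle] at hT
  simp only [OnEllipse] at hP₁ hP₂ hP₃
  simp only [incenter, d] at hI
  simp only [inradius, area, d]
  have hell1 : b^2*x1^2 + a^2*y1^2 = a^2*b^2 := by
    field_simp at hP₁; linear_combination hP₁
  have hell2 : b^2*x2^2 + a^2*y2^2 = a^2*b^2 := by
    field_simp at hP₂; linear_combination hP₂
  have hell3 : b^2*x3^2 + a^2*y3^2 = a^2*b^2 := by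
    field_simp at hP₃; linear_combination hP₃
  have hne23 : ¬(x2 = x3 ∧ y2 = y3) := by
    rintro ⟨h1, h2⟩; apply hT; rw [h1, h2]; ring
  have hne31 : ¬(x3 = x1 ∧ y3 = y1) := by
    rintro ⟨h1, h2⟩; apply hT; rw [h1, h2]; ring
  have hne12 : ¬(x1 = x2 ∧ y1 = y2) := by
    rintro ⟨h1, h2⟩; apply hT; rw [h1, h2]; ring
  have hp1 := aux_pos x2 y2 x3 y3 hne23
  have hp2 := aux_pos x3 y3 x1 y1 hne31
  have hp3 := aux_pos x1 y1 x2 y2 hne12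
  set l1 := Real.sqrt ((x2 - x3) ^ 2 + (y2 - y3) ^ 2) with hl1def
  set l2 := Real.sqrt ((x3 - x1) ^ 2 + (y3 - y1) ^ 2) with hl2def
  set l3 := Real.sqrt ((x1 - x2) ^ 2 + (y1 - y2) ^ 2) with hl3def
  have hl1p : 0 < l1 := Real.sqrt_pos.mpr hp1
  have hl2p : 0 < l2 := Real.sqrt_pos.mpr hp2
  have hl3p : 0 < l3 := Real.sqrt_pos.mpr hp3
  have hl1 : l1^2 = (x2-x3)^2+(y2-y3)^2 := Real.sq_sqrt hp1.le
  have hl2 : l2^2 = (x3-x1)^2+(y3-y1)^2 := Real.sq_sqrt hp2.le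
  have hl3 : l3^2 = (x1-x2)^2+(y1-y2)^2 := Real.sq_sqrt hp3.le
  have hs : 0 < l1 + l2 + l3 := by linarith only [hl1p, hl2p, hl3p]
  have hsne : l1 + l2 + l3 ≠ 0 := ne_of_gt hs
  rw [Prod.mk.injEq] at hI
  obtain ⟨hIx, hIy⟩ := hI
  rw [div_eq_iff hsne] at hIx hIy
  have hsx : l1*x1+l2*x2+l3*x3 = c*(l1+l2+l3) := by linear_combination hIx
  have hsy : l1*y1+l2*y2+l3*y3 = 0 := by linear_combination hIy
  have hTabs : |(x2 - x1) * (y3 - y1) - (y2 - y1) * (x3 - x1)| / 2 / ((l1 + l2 + l3) / 2)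
      = |(x2 - x1) * (y3 - y1) - (y2 - y1) * (x3 - x1)| / (l1 + l2 + l3) := by
    rw [div_div_div_comm]; norm_num
  rw [hTabs]
  set r := |(x2 - x1) * (y3 - y1) - (y2 - y1) * (x3 - x1)| / (l1 + l2 + l3) with hrdef
  have hrs : r*(l1+l2+l3) = |(x2 - x1) * (y3 - y1) - (y2 - y1) * (x3 - x1)| := by
    rw [hrdef]; exact div_mul_cancel₀ _ hsne
  have hTne : (x2 - x1) * (y3 - y1) - (y2 - y1) * (x3 - x1) ≠ 0 := hT
  have hrpos : 0 < r := by
    rw [hrdef]; exact div_pos (abs_pos.mpr hTne) hs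
  have hU := core a b c r x1 y1 x2 y2 x3 y3 l1 l2 l3
    ((x2 - x1) * (y3 - y1) - (y2 - y1) * (x3 - x1))
    ha hb hba hcpos hca hc2 rfl hTne hl1 hl1p hl2 hl2p hl3 hl3p hell1 hell2 hell3
    hsx hsy hrs hrpos
  have h2 : ((c^2*r + a*b^2)/b^2)^2 = a^2+c^2 := by
    field_simp
    linear_combination c^2*hU
  have hnn : 0 ≤ (c^2*r + a*b^2)/b^2 := by
    apply div_nonneg _ (sq_nonneg b)
    have h3 : 0 ≤ c^2*r := mul_nonneg (sq_nonneg c) hrpos.le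
    nlinarith only [h3, mul_pos ha (mul_pos hb hb)]
  have hsqrt : Real.sqrt (a^2+c^2) = (c^2*r + a*b^2)/b^2 := by
    rw [← h2]; exact Real.sqrt_sq hnn
  rw [hsqrt]
  field_simp
  ring
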